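/- For each natural number ℓ, ∫_{-1}^{1} √((1−z)/2) · P_ℓ(z) dz equals 4/3 when ℓ = 0, and equals −4/((2ℓ−1)(2ℓ+1)(2ℓ+3)) when ℓ ≥ 1. (Legendre–Fourier coefficients of √((1−z)/2).) -/

import Mathlib

/-- The `ℓ`-th Legendre polynomial (Rodrigues' formula), normalized so that `P_ℓ(1) = 1`. -/
noncomputable def legendreP (ℓ : ℕ) : Polynomial ℝ :=
  ((1 : ℝ) / (2 ^ ℓ * ℓ.factorial)) • Polynomial.derivative^[ℓ] ((Polynomial.X ^ 2 - 1) ^ ℓ)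

open Polynomial MeasureTheory intervalIntegral

namespace SqrtLeg


lemma iter_deriv_X_mul (n : ℕ) (p : ℝ[X]) :
    derivative^[n+1] (X * p)
      = X * derivative^[n+1] p + C ((n : ℝ) + 1) * derivative^[n] p := by
  induction n generalizing p with
  | zero => simp [derivative_mul]; ring
  | succ n ih =>
    rw [Function.iterate_succ_apply' derivative (n+1) (X * p), ih]
    rw [Function.iterate_succ_apply' derivative (n+1) p,
        Function.iterate_succ_apply' derivative n p]
    simp only [derivative_add, derivative_sub, derivative_mul, derivative_X,
      derivative_X_pow, derivative_C_mul, derivative_C, derivative_one, derivative_zero]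
    push_cast
    simp only [C_add, C_mul, C_1, C_0, map_ofNat]
    ring

lemma iter_deriv_X2_mul (n : ℕ) (p : ℝ[X]) :
    derivative^[n+2] ((X^2 - 1) * p)
      = (X^2 - 1) * derivative^[n+2] p
        + C (2 * ((n : ℝ) + 2)) * (X * derivative^[n+1] p)
        + C (((n : ℝ) + 2) * ((n : ℝ) + 1)) * derivative^[n] p := by
  induction n generalizing p with
  | zero =>
    simp only [Function.iterate_succ_apply, Function.iterate_zero_apply,
      Function.iterate_one]
    simp only [derivative_add, derivative_sub, derivative_mul, derivative_X,
      derivative_X_pow, derivative_C_mul, derivative_C, derivative_one, derivative_zero]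
    push_cast
    simp only [C_add, C_mul, C_1, C_0, map_ofNat]
    ring
  | succ n ih =>
    rw [Function.iterate_succ_apply' derivative (n+2) ((X^2-1) * p), ih]
    rw [Function.iterate_succ_apply' derivative (n+2) p,
        Function.iterate_succ_apply' derivative (n+1) p,
        Function.iterate_succ_apply' derivative n p]
    simp only [derivative_add, derivative_sub, derivative_mul, derivative_X,
      derivative_X_pow, derivative_C_mul, derivative_C, derivative_one, derivative_zero]
    push_cast
    simp only [C_add, C_mul, C_1, C_0, map_ofNat]
    ring

noncomputable def U (ℓ : ℕ) : ℝ[X] := (X^2 - 1)^ℓ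
noncomputable def V (ℓ : ℕ) : ℝ[X] := derivative^[ℓ] (U ℓ)

lemma deriv_U (ℓ : ℕ) : derivative (U (ℓ+1)) = C (2*(ℓ:ℝ)+2) * (X * U ℓ) := by
  unfold U
  rw [derivative_pow]
  simp only [derivative_sub, derivative_one, derivative_X_pow, Nat.add_sub_cancel]
  push_cast
  simp only [C_add, C_mul, C_1, C_0, map_ofNat]
  ring

lemma X2_deriv_U (ℓ : ℕ) : (X^2 - 1) * derivative (U ℓ) = C (2*(ℓ:ℝ)) * (X * U ℓ) := by
  cases ℓ with
  | zero => simp [U]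
  | succ n =>
    rw [deriv_U]
    unfold U
    push_cast
    simp only [C_add, C_mul, C_1, C_0, map_ofNat]
    ring

lemma alphaV (ℓ : ℕ) :
    derivative (V (ℓ+1))
      = C (2*(ℓ:ℝ)+2) * (X * derivative (V ℓ) + C ((ℓ:ℝ)+1) * V ℓ) := by
  have h1 : derivative (V (ℓ+1)) = derivative^[ℓ+1] (derivative (U (ℓ+1))) := by
    rw [V, ← Function.iterate_succ_apply' derivative (ℓ+1), Function.iterate_succ_apply]
  rw [h1, deriv_U, iterate_derivative_C_mul, iter_deriv_X_mul]
  rw [V, Function.iterate_succ_apply' derivative ℓ (U ℓ)]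

lemma odeV (ℓ : ℕ) :
    (X^2-1) * derivative (derivative (V ℓ)) + 2 * (X * derivative (V ℓ))
      = C ((ℓ:ℝ)*((ℓ:ℝ)+1)) * V ℓ := by
  cases ℓ with
  | zero => simp [V, U]
  | succ n =>
    -- apply derivative^[n+3] to (X^2-1) * derivative (U (n+1)) = C (2(n+1)) * (X * U (n+1))
    have key := congrArg (derivative^[n+2]) (X2_deriv_U (n+1))
    rw [iter_deriv_X2_mul n (derivative (U (n+1)))] at key
    rw [iterate_derivative_C_mul, iter_deriv_X_mul (n+1)] at key
    have e0 : ∀ k : ℕ, derivative^[k] (derivative (U (n+1))) = derivative^[k+1] (U (n+1)) := by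
      intro k; rw [Function.iterate_succ_apply]
    rw [e0 (n+2), e0 (n+1), e0 n] at key
    have eV : derivative^[n+2] (U (n+1)) = derivative (V (n+1)) := by
      rw [V, Function.iterate_succ_apply' derivative (n+1)]
    have eV2 : derivative^[n+3] (U (n+1)) = derivative (derivative (V (n+1))) := by
      have : (n+3) = (n+2)+1 := rfl
      rw [this, Function.iterate_succ_apply' derivative (n+2), eV]
    have eV0 : derivative^[n+1] (U (n+1)) = V (n+1) := rfl
    rw [eV, eV2, eV0] at key
    push_cast at key ⊢
    simp only [C_add, C_mul, C_1, C_0, map_ofNat] at key ⊢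
    linear_combination key

lemma legendreP_eq (ℓ : ℕ) : legendreP ℓ = C ((1:ℝ) / (2 ^ ℓ * ℓ.factorial)) * V ℓ := by
  rw [legendreP, smul_eq_C_mul]; rfl

lemma alphaP (ℓ : ℕ) :
    derivative (legendreP (ℓ+1))
      = X * derivative (legendreP ℓ) + C ((ℓ:ℝ)+1) * legendreP ℓ := by
  have hc : ((1:ℝ) / (2 ^ (ℓ+1) * (ℓ+1).factorial)) * (2*(ℓ:ℝ)+2)
      = (1:ℝ) / (2 ^ ℓ * ℓ.factorial) := by
    rw [Nat.factorial_succ, pow_succ]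
    have h1 : (2:ℝ) ^ ℓ ≠ 0 := by positivity
    have h2 : ((ℓ.factorial : ℝ)) ≠ 0 := by exact_mod_cast ℓ.factorial_ne_zero
    field_simp
    push_cast
    ring
  rw [legendreP_eq, legendreP_eq, derivative_C_mul, derivative_C_mul, alphaV]
  rw [← mul_assoc, ← C_mul, hc]
  ring

lemma odeP (ℓ : ℕ) :
    (X^2-1) * derivative (derivative (legendreP ℓ)) + 2 * (X * derivative (legendreP ℓ))
      = C ((ℓ:ℝ)*((ℓ:ℝ)+1)) * legendreP ℓ := by
  rw [legendreP_eq, derivative_C_mul, derivative_C_mul]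
  have := odeV ℓ
  linear_combination (C ((1:ℝ) / (2 ^ ℓ * ℓ.factorial))) * this

noncomputable def R (ℓ : ℕ) : ℝ[X] := (legendreP ℓ).comp (1 - 2*X)

lemma R_zero : R 0 = 1 := by
  simp [R, legendreP]

lemma deriv_R (ℓ : ℕ) :
    derivative (R ℓ) = ((derivative (legendreP ℓ)).comp (1 - 2*X)) * (-2) := by
  rw [R, derivative_comp]
  simp
  ring

lemma deriv2_R (ℓ : ℕ) :
    derivative (derivative (R ℓ))
      = ((derivative (derivative (legendreP ℓ))).comp (1 - 2*X)) * 4 := by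
  rw [deriv_R, derivative_mul, derivative_comp]
  simp
  ring

lemma alphaR (ℓ : ℕ) :
    derivative (R (ℓ+1)) = (1 - 2*X) * derivative (R ℓ) - C (2*(ℓ:ℝ)+2) * R ℓ := by
  have h := congrArg (fun p : ℝ[X] => p.comp (1 - 2*X)) (alphaP ℓ)
  simp only [add_comp, mul_comp, X_comp, C_comp] at h
  rw [deriv_R, deriv_R, h]
  rw [show (legendreP ℓ).comp (1-2*X) = R ℓ from rfl]
  simp only [C_add, C_mul, C_1, C_0, map_ofNat]
  ring

lemma odeR (ℓ : ℕ) :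
    (X^2 - X) * derivative (derivative (R ℓ)) + (2*X - 1) * derivative (R ℓ)
      = C ((ℓ:ℝ)*((ℓ:ℝ)+1)) * R ℓ := by
  have h := congrArg (fun p : ℝ[X] => p.comp (1 - 2*X)) (odeP ℓ)
  simp only [add_comp, mul_comp, X_comp, C_comp, sub_comp, one_comp, pow_comp,
    ofNat_comp] at h
  push_cast at h
  rw [deriv2_R, deriv_R]
  rw [show (legendreP ℓ).comp (1-2*X) = R ℓ from rfl] at h
  linear_combination h

lemma evalR_deriv (ℓ : ℕ) :
    (derivative (R ℓ)).eval 1 = (ℓ:ℝ)*((ℓ:ℝ)+1) * (R ℓ).eval 1 := by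
  have h := congrArg (fun p : ℝ[X] => p.eval 1) (odeR ℓ)
  simp only [eval_add, eval_mul, eval_sub, eval_pow, eval_X, eval_one, eval_C, eval_ofNat] at h
  linarith [h]

lemma evalR_succ (ℓ : ℕ) : (R (ℓ+1)).eval 1 = -(R ℓ).eval 1 := by
  have h := congrArg (fun p : ℝ[X] => p.eval 1) (alphaR ℓ)
  simp only [eval_sub, eval_mul, eval_add, eval_one, eval_X, eval_C, eval_ofNat] at h
  rw [evalR_deriv ℓ, evalR_deriv (ℓ+1)] at h
  have hne : ((ℓ:ℝ)+1)*((ℓ:ℝ)+2) ≠ 0 := by positivity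
  apply mul_left_cancel₀ hne
  push_cast at h ⊢
  linear_combination h

lemma evalR_one (ℓ : ℕ) : (R ℓ).eval 1 = (-1)^ℓ := by
  induction ℓ with
  | zero => simp [R_zero]
  | succ n ih => rw [evalR_succ, ih]; ring


noncomputable def Mf (p : ℝ[X]) : ℝ := ∫ x in (0:ℝ)..1, x ^ (-(1/2) : ℝ) * p.eval x

lemma Mint (p : ℝ[X]) :
    IntervalIntegrable (fun x : ℝ => x ^ (-(1/2) : ℝ) * p.eval x) volume 0 1 := by
  apply (intervalIntegrable_rpow' (by norm_num)).mul_continuousOn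
  exact (Polynomial.continuous_aeval p).continuousOn

lemma M_add (p q : ℝ[X]) : Mf (p + q) = Mf p + Mf q := by
  rw [Mf, Mf, Mf, ← integral_add (Mint p) (Mint q)]
  apply integral_congr
  intro x _
  simp [mul_add]

lemma M_Cmul (a : ℝ) (p : ℝ[X]) : Mf (C a * p) = a * Mf p := by
  rw [Mf, Mf, ← intervalIntegral.integral_const_mul]
  apply integral_congr
  intro x _
  simp; ring

lemma M_zero : Mf 0 = 0 := by simp [Mf]

lemma cast_sub_half_ne (n : ℕ) : (n:ℝ) - 1/2 ≠ 0 := by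
  rcases Nat.eq_zero_or_pos n with h | h
  · simp [h]
  · have : (1:ℝ) ≤ (n:ℝ) := by exact_mod_cast h
    intro hc; nlinarith

lemma rpow_mul_pow (n : ℕ) {x : ℝ} (hx : x ∈ Set.uIcc (0:ℝ) 1) :
    x ^ (-(1/2) : ℝ) * x ^ n = x ^ ((n:ℝ) - 1/2) := by
  rw [Set.uIcc_of_le (by norm_num : (0:ℝ) ≤ 1)] at hx
  rcases eq_or_lt_of_le hx.1 with h0 | h0
  · rw [← h0]
    rw [Real.zero_rpow (by norm_num : (-(1/2):ℝ) ≠ 0),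
        Real.zero_rpow (cast_sub_half_ne n), zero_mul]
  · rw [← Real.rpow_natCast x n, ← Real.rpow_add h0]
    norm_num
    ring_nf

lemma Mmono (n : ℕ) : Mf (X ^ n) = 2 / (2*(n:ℝ) + 1) := by
  rw [Mf]
  have h1 : (∫ x in (0:ℝ)..1, x ^ (-(1/2):ℝ) * (X^n : ℝ[X]).eval x)
      = ∫ x in (0:ℝ)..1, x ^ ((n:ℝ) - 1/2) := by
    apply integral_congr
    intro x hx
    simp only [eval_pow, eval_X]
    exact rpow_mul_pow n hx
  rw [h1, integral_rpow (Or.inl (by have := n.cast_nonneg (α:=ℝ); linarith))]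
  have h2 : (n:ℝ) - 1/2 + 1 = (n:ℝ) + 1/2 := by ring
  rw [h2, Real.one_rpow, Real.zero_rpow (by positivity), ]
  have h3 : (n:ℝ) + 1/2 ≠ 0 := by positivity
  field_simp
  ring

lemma M_one : Mf 1 = 2 := by
  have := Mmono 0
  simpa using this

lemma M_monomial (n : ℕ) (a : ℝ) : Mf (C a * X ^ n) = a * (2 / (2*(n:ℝ) + 1)) := by
  rw [M_Cmul, Mmono]

lemma Mparts (m : ℕ) (p : ℝ[X]) :
    Mf (X ^ (m+1) * derivative p) = p.eval 1 - ((m:ℝ) + 1/2) * Mf (X ^ m * p) := by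
  induction p using Polynomial.induction_on' with
  | add p q hp hq =>
    rw [derivative_add, mul_add, M_add, mul_add, M_add, eval_add]
    rw [hp, hq]; ring
  | monomial n a =>
    rw [← C_mul_X_pow_eq_monomial]
    cases n with
    | zero =>
      simp only [pow_zero, mul_one, derivative_C, mul_zero, M_zero, eval_C]
      rw [show (X:ℝ[X])^m * (C a) = C a * X^m by ring, M_monomial]
      have : 2*(m:ℝ)+1 ≠ 0 := by positivity
      field_simp
      ring
    | succ n =>
      rw [derivative_C_mul, derivative_X_pow]
      simp only [Nat.add_sub_cancel, Nat.cast_add, Nat.cast_one]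
      rw [show (X:ℝ[X])^(m+1) * (C a * (C ((n:ℝ)+1) * X^n)) = C (a*((n:ℝ)+1)) * X^(m+1+n) by
        simp only [C_mul]; ring]
      rw [show (X:ℝ[X])^m * (C a * X^(n+1)) = C a * X^(m+n+1) by ring]
      rw [M_monomial, M_monomial]
      simp only [eval_mul, eval_C, eval_pow, eval_X, one_pow, mul_one]
      have h1 : 2*((m:ℝ)+1+(n:ℝ)) + 1 ≠ 0 := by positivity
      have h2 : 2*((m:ℝ)+(n:ℝ)+1) + 1 ≠ 0 := by positivity
      push_cast
      field_simp
      ring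

lemma MpartsX (p : ℝ[X]) : Mf (X * derivative p) = p.eval 1 - (1/2) * Mf p := by
  have h := Mparts 0 p
  simpa using h

lemma Elambda (ℓ : ℕ) :
    (2*(ℓ:ℝ)-1) * (2*(ℓ:ℝ)+3) * Mf (X * R ℓ) = - Mf (R ℓ) := by
  set r := R ℓ
  set r' := derivative r
  have hpoly : (X:ℝ[X])^3 * derivative r' + C 2 * (X^2*r')
      = X^2 * derivative r' + X * r' + C ((ℓ:ℝ)*((ℓ:ℝ)+1)) * (X*r) := by
    have h := odeR ℓ
    simp only [map_ofNat]
    linear_combination X * h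
  have hM := congrArg Mf hpoly
  rw [M_add, M_add, M_add, M_Cmul, M_Cmul] at hM
  have hA : Mf ((X:ℝ[X])^3 * derivative r') = r'.eval 1 - (5/2) * Mf (X^2 * r') := by
    have := Mparts 2 r'; rw [this]; norm_num
  have hB : Mf ((X:ℝ[X])^2 * derivative r') = r'.eval 1 - (3/2) * Mf (X^1 * r') := by
    have := Mparts 1 r'; rw [this]; norm_num
  have hC : Mf ((X:ℝ[X])^2 * r') = r.eval 1 - (3/2) * Mf (X^1 * r) := by
    have h := Mparts 1 r; rw [h]; norm_num
  have hD : Mf ((X:ℝ[X])^1 * r') = r.eval 1 - (1/2) * Mf r := by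
    have := Mparts 0 r; simpa using this
  have e1 : Mf ((X:ℝ[X])^1 * r') = Mf (X * r') := by norm_num
  have e2 : Mf ((X:ℝ[X])^1 * r) = Mf (X * r) := by norm_num
  rw [hA, hB] at hM
  rw [e1] at hM
  rw [show Mf ((X:ℝ[X])^2 * r') = r.eval 1 - (3/2) * Mf (X * r) by rw [hC, e2]] at hM
  rw [show Mf ((X:ℝ[X]) * r') = r.eval 1 - (1/2) * Mf r by rw [← e1, hD]] at hM
  linear_combination -4 * hM

lemma Erec (ℓ : ℕ) :
    Mf (R (ℓ+1)) = Mf (R ℓ) + (4*(ℓ:ℝ)-2) * Mf (X * R ℓ) := by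
  have hpoly : X * derivative (R (ℓ+1)) + C 2 * (X^2 * derivative (R ℓ))
      + C (2*(ℓ:ℝ)+2) * (X * R ℓ) = X * derivative (R ℓ) := by
    simp only [map_ofNat]
    linear_combination X * (alphaR ℓ)
  have hM := congrArg Mf hpoly
  rw [M_add, M_add, M_Cmul, M_Cmul] at hM
  rw [MpartsX (R (ℓ+1)), MpartsX (R ℓ)] at hM
  have hC : Mf ((X:ℝ[X])^2 * derivative (R ℓ)) = (R ℓ).eval 1 - (3/2) * Mf (X^1 * R ℓ) := by
    have h := Mparts 1 (R ℓ); rw [h]; norm_num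
  have e2 : Mf ((X:ℝ[X])^1 * R ℓ) = Mf (X * R ℓ) := by norm_num
  rw [e2] at hC
  rw [hC, evalR_succ ℓ] at hM
  linear_combination -2 * hM

lemma two_cast_ne_one (ℓ : ℕ) : (2*(ℓ:ℝ) - 1) ≠ 0 := by
  rcases Nat.eq_zero_or_pos ℓ with h | h
  · simp [h]
  · have : (1:ℝ) ≤ (ℓ:ℝ) := by exact_mod_cast h
    intro hc; nlinarith

lemma m_val (ℓ : ℕ) : Mf (R ℓ) = 2 / (2*(ℓ:ℝ)+1) := by
  induction ℓ with
  | zero => rw [R_zero, M_one]; norm_num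
  | succ n ih =>
    have h1 := two_cast_ne_one n
    have h2 : (2*(n:ℝ)+1) ≠ 0 := by positivity
    have h3 : (2*(n:ℝ)+3) ≠ 0 := by positivity
    have hE := Elambda n
    have hR := Erec n
    rw [ih] at hE hR
    push_cast
    rw [hR]
    -- (2n-1)(2n+3) * lam = -(2/(2n+1))
    have hlam : Mf (X * R n) = -(2/(2*(n:ℝ)+1)) / ((2*(n:ℝ)-1) * (2*(n:ℝ)+3)) := by
      field_simp at hE ⊢
      linarith [hE]
    rw [hlam]
    field_simp
    ring

lemma lam_val (ℓ : ℕ) :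
    Mf (X * R ℓ) = -2 / ((2*(ℓ:ℝ)-1) * (2*(ℓ:ℝ)+1) * (2*(ℓ:ℝ)+3)) := by
  have h1 := two_cast_ne_one ℓ
  have h2 : (2*(ℓ:ℝ)+1) ≠ 0 := by positivity
  have h3 : (2*(ℓ:ℝ)+3) ≠ 0 := by positivity
  have hE := Elambda ℓ
  rw [m_val] at hE
  field_simp at hE ⊢
  linarith [hE]

lemma ptwise (p : ℝ[X]) {x : ℝ} (h0 : 0 ≤ x) :
    Real.sqrt x * p.eval x = x ^ (-(1/2) : ℝ) * (X * p).eval x := by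
  rcases eq_or_lt_of_le h0 with h | h
  · rw [← h]; simp
  · rw [eval_mul, eval_X, Real.sqrt_eq_rpow]
    rw [show x ^ (-(1/2):ℝ) * (x * p.eval x) = (x ^ (-(1/2):ℝ) * x) * p.eval x by ring]
    congr 1
    symm
    calc x ^ (-(1/2):ℝ) * x = x ^ (-(1/2):ℝ) * x ^ (1:ℝ) := by rw [Real.rpow_one]
      _ = x ^ ((1:ℝ)/2) := by rw [← Real.rpow_add h]; norm_num

lemma subst (ℓ : ℕ) :
    (∫ z in (-1:ℝ)..1, Real.sqrt ((1 - z) / 2) * (legendreP ℓ).eval z)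
      = 2 * Mf (X * R ℓ) := by
  have key := integral_comp_mul_add
    (f := fun x : ℝ => x ^ (-(1/2) : ℝ) * (X * R ℓ).eval x)
    (a := -1) (b := 1) (c := -(1/2 : ℝ)) (d := 1/2) (by norm_num)
  have h1 : (∫ z in (-1:ℝ)..1, Real.sqrt ((1 - z) / 2) * (legendreP ℓ).eval z)
      = ∫ z in (-1:ℝ)..1,
          (fun x : ℝ => x ^ (-(1/2) : ℝ) * (X * R ℓ).eval x) (-(1/2) * z + 1/2) := by
    apply integral_congr
    intro z hz
    rw [Set.uIcc_of_le (by norm_num : (-1:ℝ) ≤ 1)] at hz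
    have hx0 : (0:ℝ) ≤ -(1/2) * z + 1/2 := by
      have := hz.2; linarith
    simp only
    rw [← ptwise (R ℓ) hx0]
    have h2 : (R ℓ).eval (-(1/2) * z + 1/2) = (legendreP ℓ).eval z := by
      rw [R, eval_comp]
      norm_num
      ring_nf
    rw [h2]
    congr 2
    ring
  rw [h1, key, show (-(1/2:ℝ))*(-1) + 1/2 = 1 by norm_num,
    show (-(1/2:ℝ))*1 + 1/2 = 0 by norm_num, integral_symm, Mf]
  simp only [smul_eq_mul]
  norm_num
end SqrtLeg

/-- Legendre–Fourier coefficients of `√((1-z)/2)`: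
`∫_{-1}^{1} √((1-z)/2) P_ℓ(z) dz` equals `4/3` for `ℓ = 0`
and `-4/((2ℓ-1)(2ℓ+1)(2ℓ+3))` for `ℓ ≥ 1`. -/
theorem sqrt_legendre_coefficients (ℓ : ℕ) :
    ∫ z in (-1 : ℝ)..1, Real.sqrt ((1 - z) / 2) * (legendreP ℓ).eval z
      = if ℓ = 0 then 4 / 3
        else -4 / ((2 * (ℓ : ℝ) - 1) * (2 * (ℓ : ℝ) + 1) * (2 * (ℓ : ℝ) + 3)) := by
  rw [SqrtLeg.subst ℓ, SqrtLeg.lam_val ℓ]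
  rcases eq_or_ne ℓ 0 with h | h
  · subst h; norm_num
  · rw [if_neg h]; ring
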